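/- Let l_n denote the number of pure λυ-terms (i.e., λ-terms in de Bruijn notation, containing no closure) of size n. Then the power series L(z) = ∑_n l_n z^n has positive radius of convergence and, for all real z > 0 in a sufficiently small neighbourhood of 0, L(z) = (1 − z − √((1 − 3z − z² − z³)/(1 − z)))/(2z). -/

import Mathlib

mutual
/-- λυ-terms in de Bruijn notation, with explicit closures. -/
inductive LTerm : Type
  | idx : Nat → LTerm
  | lam : LTerm → LTerm
  | app : LTerm → LTerm → LTerm
  | clos : LTerm → LSub → LTerm
  deriving DecidableEq

/-- explicit λυ-substitutions. -/
inductive LSub : Type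
  | slash : LTerm → LSub
  | lift : LSub → LSub
  | shift : LSub
  deriving DecidableEq
end

mutual
/-- natural size of a λυ-term: the number of constructors (|idx n| = n+1). -/
def LTerm.size : LTerm → Nat
  | .idx n => n + 1
  | .lam a => 1 + a.size
  | .app a b => 1 + a.size + b.size
  | .clos a s => 1 + a.size + s.size

/-- natural size of a substitution. -/
def LSub.size : LSub → Nat
  | .slash a => 1 + a.size
  | .lift s => 1 + s.size
  | .shift => 1
end

/-- a λυ-term is pure if it contains no closure; pure terms are exactly the ψ-normal forms. -/
def LTerm.IsPure : LTerm → Prop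
  | .idx _ => True
  | .lam a => a.IsPure
  | .app a b => a.IsPure ∧ b.IsPure
  | .clos _ _ => False

/-- one normal-order (leftmost-outermost) ψ-reduction step. -/
inductive NStep : LTerm → LTerm → Prop
  /-- (App) (ab)[s] → a[s](b[s]) -/
  | appS (a b : LTerm) (s : LSub) :
      NStep (.clos (.app a b) s) (.app (.clos a s) (.clos b s))
  /-- (Lambda) (λa)[s] → λ(a[⇑(s)]) -/
  | lamS (a : LTerm) (s : LSub) :
      NStep (.clos (.lam a) s) (.lam (.clos a (.lift s)))
  /-- (FVar) 0[a/] → a -/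
  | fvar (a : LTerm) : NStep (.clos (.idx 0) (.slash a)) a
  /-- (RVar) (S n)[a/] → n -/
  | rvar (n : Nat) (a : LTerm) : NStep (.clos (.idx (n+1)) (.slash a)) (.idx n)
  /-- (FVarLift) 0[⇑(s)] → 0 -/
  | fvarLift (s : LSub) : NStep (.clos (.idx 0) (.lift s)) (.idx 0)
  /-- (RVarLift) (S n)[⇑(s)] → n[s][↑] -/
  | rvarLift (n : Nat) (s : LSub) :
      NStep (.clos (.idx (n+1)) (.lift s)) (.clos (.clos (.idx n) s) .shift)
  /-- (VarShift) n[↑] → S n -/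
  | varShift (n : Nat) : NStep (.clos (.idx n) .shift) (.idx (n+1))
  /-- reduce under an abstraction -/
  | lamCong {a a' : LTerm} : NStep a a' → NStep (.lam a) (.lam a')
  /-- reduce in the left part of an application -/
  | appLeft {a a' : LTerm} (b : LTerm) : NStep a a' → NStep (.app a b) (.app a' b)
  /-- reduce in the right part of an application, provided the left part is normal -/
  | appRight {b b' : LTerm} (a : LTerm) :
      a.IsPure → NStep b b' → NStep (.app a b) (.app a b')
  /-- reduce in the body of a closure, provided the closure is not itself a ψ-redex,
      i.e. its body is again a closure -/
  | closCong {t t' : LTerm} (s : LSub) :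
      (∃ u v, t = LTerm.clos u v) → NStep t t' → NStep (.clos t s) (.clos t' s)

/-- `NormIn t k` : `t` reaches its ψ-normal form in exactly `k` normal-order
ψ-reduction steps (written t ↓_k). -/
inductive NormIn : LTerm → Nat → Prop
  | base {t : LTerm} : t.IsPure → NormIn t 0
  | step {t t' : LTerm} {k : Nat} : NStep t t' → NormIn t' k → NormIn t (k+1)

/-- the number of pure λυ-terms (λ-terms in de Bruijn notation, i.e. ψ-normal
forms) of size n. -/
noncomputable def pureCount (n : Nat) : Nat :=
  Nat.card {t : LTerm // t.IsPure ∧ t.size = n}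

namespace PureGF

def c : ℕ → ℕ
  | 0 => 0
  | n+1 => 1 + c n + ∑ k ∈ (Finset.range (n+1)).attach, c k.1 * c (n - k.1)
decreasing_by
  · omega
  · have := k.2; simp only [Finset.mem_range] at this; omega
  · omega

lemma c_succ (n : ℕ) :
    c (n+1) = 1 + c n + ∑ k ∈ Finset.range (n+1), c k * c (n - k) := by
  rw [c]
  congr 1
  exact Finset.sum_attach (Finset.range (n+1)) (fun k => c k * c (n - k))

lemma size_pos (t : LTerm) : 1 ≤ t.size := by
  cases t <;> simp [LTerm.size] <;> omega

abbrev PT (n : ℕ) := {t : LTerm // t.IsPure ∧ t.size = n}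
abbrev PTle (n : ℕ) := {t : LTerm // t.IsPure ∧ t.size ≤ n}

instance : IsEmpty (PTle 0) :=
  ⟨fun ⟨t, _, h⟩ => by have := size_pos t; omega⟩

def g (n : ℕ) : PTle (n+1) → (Fin (n+2)) ⊕ PTle n ⊕ (PTle n × PTle n)
  | ⟨.idx m, h⟩ => .inl ⟨m, by have := h.2; simp [LTerm.size] at this; omega⟩
  | ⟨.lam a, h⟩ => .inr (.inl ⟨a, h.1, by have := h.2; simp [LTerm.size] at this; omega⟩)
  | ⟨.app a b, h⟩ => .inr (.inr
      (⟨a, h.1.1, by have := h.2; have := size_pos b; simp [LTerm.size] at *; omega⟩,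
       ⟨b, h.1.2, by have := h.2; have := size_pos a; simp [LTerm.size] at *; omega⟩))
  | ⟨.clos _ _, h⟩ => h.1.elim

lemma g_inj (n : ℕ) : Function.Injective (g n) := by
  rintro ⟨tx, hx⟩ ⟨ty, hy⟩ h
  cases tx <;> cases ty <;>
    first
    | exact hx.1.elim
    | exact hy.1.elim
    | (simp only [g, Sum.inl.injEq, Sum.inr.injEq, Fin.mk.injEq, Subtype.mk.injEq,
         Prod.mk.injEq, reduceCtorEq] at h
       all_goals (apply Subtype.ext; obtain ⟨h1, h2⟩ := h; simp [h1, h2]))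
    | (simp only [g, Sum.inl.injEq, Sum.inr.injEq, Fin.mk.injEq, Subtype.mk.injEq,
         Prod.mk.injEq, reduceCtorEq] at h
       all_goals (apply Subtype.ext; simp [h]))

instance PTle.finite : ∀ n, Finite (PTle n)
  | 0 => inferInstance
  | n+1 => by
      have := PTle.finite n
      exact Finite.of_injective _ (g_inj n)

instance (n : ℕ) : Finite (PT n) :=
  Finite.of_injective (fun t : PT n => (⟨t.1, t.2.1, le_of_eq t.2.2⟩ : PTle n))
    (by rintro ⟨a, _⟩ ⟨b, _⟩ h; simpa using congrArg Subtype.val h)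


def h (n : ℕ) : (Unit ⊕ PT n ⊕ (Σ k : Fin (n+1), PT k.1 × PT (n - k.1))) → PT (n+1)
  | .inl _ => ⟨.idx n, trivial, rfl⟩
  | .inr (.inl ⟨a, ha⟩) => ⟨.lam a, ha.1, by simp [LTerm.size, ha.2]; omega⟩
  | .inr (.inr ⟨k, ⟨a, ha⟩, ⟨b, hb⟩⟩) => ⟨.app a b, ⟨ha.1, hb.1⟩,
      by have := k.2; simp [LTerm.size, ha.2, hb.2]; omega⟩

lemma h_inj (n : ℕ) : Function.Injective (h n) := by
  rintro (_ | ⟨a,ha⟩ | ⟨k,⟨a,ha⟩,⟨b,hb⟩⟩) (_ | ⟨a',ha'⟩ | ⟨k',⟨a',ha'⟩,⟨b',hb'⟩⟩) hxy <;>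
    simp only [h, Subtype.mk.injEq, LTerm.idx.injEq, LTerm.lam.injEq, LTerm.app.injEq,
      reduceCtorEq] at hxy <;>
    first
      | rfl
      | (subst hxy; rfl)
      | (obtain ⟨h1, h2⟩ := hxy
         subst h1; subst h2
         have hk : k = k' := Fin.ext (by rw [← ha.2, ← ha'.2])
         subst hk
         rfl)

lemma h_surj (n : ℕ) : Function.Surjective (h n) := by
  rintro ⟨t, hp, hs⟩
  cases t with
  | idx m =>
      have hm : m = n := by simp [LTerm.size] at hs; omega
      subst hm
      exact ⟨.inl (), rfl⟩
  | lam a =>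
      refine ⟨.inr (.inl ⟨a, hp, ?_⟩), rfl⟩
      simp [LTerm.size] at hs; omega
  | app a b =>
      have h1 : a.size < n + 1 := by
        have := size_pos b; simp [LTerm.size] at hs; omega
      exact ⟨.inr (.inr ⟨⟨a.size, h1⟩, ⟨a, hp.1, rfl⟩,
        ⟨b, hp.2, show b.size = n - a.size by simp [LTerm.size] at hs; omega⟩⟩), rfl⟩
  | clos a s => exact hp.elim

lemma card_PT_succ (n : ℕ) :
    Nat.card (PT (n+1)) = 1 + Nat.card (PT n)
      + ∑ k ∈ Finset.range (n+1), Nat.card (PT k) * Nat.card (PT (n-k)) := by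
  have hb : Function.Bijective (h n) := ⟨h_inj n, h_surj n⟩
  rw [← Nat.card_eq_of_bijective (h n) hb, Nat.card_sum, Nat.card_sum]
  letI : ∀ k : Fin (n+1), Fintype (PT k.1 × PT (n - k.1)) := fun k => Fintype.ofFinite _
  have hsig : Nat.card ((k : Fin (n+1)) × PT k.1 × PT (n - k.1))
      = ∑ i : Fin (n + 1), Nat.card (PT i.1) * Nat.card (PT (n - i.1)) := by
    rw [Nat.card_eq_fintype_card, Fintype.card_sigma]
    exact Finset.sum_congr rfl fun i _ => by
      rw [← Nat.card_eq_fintype_card, Nat.card_prod]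
  rw [Finset.sum_range (fun k => Nat.card (PT k) * Nat.card (PT (n-k))), hsig,
    Nat.card_unique]
  ring

lemma pureCount_zero : pureCount 0 = 0 := by
  haveI : IsEmpty (PT 0) := ⟨fun x => by have := size_pos x.1; have := x.2.2; omega⟩
  simp [pureCount, Nat.card_of_isEmpty]

lemma pureCount_eq (n : ℕ) : pureCount n = c n := by
  induction n using Nat.strong_induction_on with
  | _ n ih =>
    match n with
    | 0 => simpa [c] using pureCount_zero
    | n+1 =>
      rw [show pureCount (n+1) = Nat.card (PT (n+1)) from rfl, card_PT_succ, c_succ]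
      congr 1
      · congr 1
        exact ih n (by omega)
      · exact Finset.sum_congr rfl fun k hk => by
          rw [Finset.mem_range] at hk
          rw [show Nat.card (PT k) = pureCount k from rfl,
              show Nat.card (PT (n-k)) = pureCount (n-k) from rfl,
              ih k (by omega), ih (n-k) (by omega)]


lemma catalan_le_succ (n : ℕ) : catalan n ≤ catalan (n+1) := by
  rw [catalan_succ]
  calc catalan n = catalan ((0 : Fin (n+1)) : ℕ) * catalan (n - ((0 : Fin (n+1)) : ℕ)) := by simp
  _ ≤ ∑ i : Fin (n+1), catalan i * catalan (n - i) :=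
      Finset.single_le_sum (f := fun i : Fin (n+1) => catalan i * catalan (n - i))
        (fun _ _ => Nat.zero_le _) (Finset.mem_univ (0 : Fin (n+1)))

lemma catalan_le_four_pow (n : ℕ) : catalan n ≤ 4 ^ n := by
  have h1 : catalan n ≤ n.centralBinom := by
    rw [catalan_eq_centralBinom_div]; exact Nat.div_le_self _ _
  refine h1.trans ?_
  have h2 : n.centralBinom ≤ 2 ^ (2*n) := by
    rw [Nat.centralBinom]
    calc (2*n).choose n ≤ ∑ i ∈ Finset.range (2*n+1), (2*n).choose i :=
        Finset.single_le_sum (fun _ _ => Nat.zero_le _) (by simp [Finset.mem_range]; omega)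
      _ = 2 ^ (2*n) := Nat.sum_range_choose (2*n)
  calc n.centralBinom ≤ 2 ^ (2*n) := h2
    _ = 4 ^ n := by rw [pow_mul]; norm_num

lemma one_le_catalan : ∀ n, 1 ≤ catalan n
  | 0 => by simp
  | n+1 => (one_le_catalan n).trans (catalan_le_succ n)

lemma c_le_catalan (n : ℕ) : c n ≤ catalan n * 3 ^ n := by
  induction n using Nat.strong_induction_on with
  | _ n ih =>
    match n with
    | 0 => simp [c]
    | n+1 =>
      rw [c_succ]
      have hconv : ∑ k ∈ Finset.range (n+1), c k * c (n-k) ≤ 3^n * catalan (n+1) := by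
        calc ∑ k ∈ Finset.range (n+1), c k * c (n-k)
            ≤ ∑ k ∈ Finset.range (n+1), (catalan k * 3^k) * (catalan (n-k) * 3^(n-k)) :=
              Finset.sum_le_sum fun k hk => Nat.mul_le_mul
                (ih k (by rw [Finset.mem_range] at hk; omega)) (ih (n-k) (by omega))
          _ = ∑ k ∈ Finset.range (n+1), 3^n * (catalan k * catalan (n-k)) := by
              refine Finset.sum_congr rfl fun k hk => ?_
              rw [Finset.mem_range] at hk
              have h3 : 3^k * 3^(n-k) = 3^n := by rw [← pow_add]; congr 1; omega
              calc (catalan k * 3^k) * (catalan (n-k) * 3^(n-k))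
                  = (3^k * 3^(n-k)) * (catalan k * catalan (n-k)) := by ring
                _ = 3^n * (catalan k * catalan (n-k)) := by rw [h3]
          _ = 3^n * ∑ k ∈ Finset.range (n+1), catalan k * catalan (n-k) := by
              rw [Finset.mul_sum]
          _ = 3^n * catalan (n+1) := by
              rw [catalan_succ, Finset.sum_range]
      have hm : catalan n ≤ catalan (n+1) := catalan_le_succ n
      have hp : 1 ≤ catalan (n+1) := one_le_catalan (n+1)
      have h3 : 1 ≤ 3^n := Nat.one_le_pow _ _ (by norm_num)
      have hcn : c n ≤ catalan (n+1) * 3^n :=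
        (ih n (by omega)).trans (Nat.mul_le_mul_right _ hm)
      calc 1 + c n + ∑ k ∈ Finset.range (n+1), c k * c (n-k)
          ≤ 1 + catalan (n+1) * 3^n + 3^n * catalan (n+1) := by
            exact Nat.add_le_add (Nat.add_le_add_left hcn 1) hconv
        _ ≤ catalan (n+1) * 3^(n+1) := by
            rw [pow_succ]
            nlinarith
      
lemma c_le_twelve (n : ℕ) : c n ≤ 12 ^ n := by
  calc c n ≤ catalan n * 3^n := c_le_catalan n
    _ ≤ 4^n * 3^n := Nat.mul_le_mul_right _ (catalan_le_four_pow n)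
    _ = 12^n := by rw [← mul_pow]; norm_num

end PureGF

open PureGF

/-- The power series L(z) = ∑ l_n z^n of pure λυ-terms has positive radius of
convergence and, for all real z > 0 sufficiently close to 0, its sum equals
(1 − z − √((1 − 3z − z² − z³)/(1 − z)))/(2z). -/
theorem pure_generating_function :
    ∃ r : ℝ, 0 < r ∧ ∀ z : ℝ, 0 < z → z < r →
      HasSum (fun n : ℕ => (pureCount n : ℝ) * z ^ n)
        ((1 - z - Real.sqrt ((1 - 3*z - z^2 - z^3) / (1 - z))) / (2*z)) := by
  refine ⟨1/100, by norm_num, fun z hz0 hzr => ?_⟩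
  have hz1 : z < 1 := by linarith
  have h12 : 12 * z < 1 := by linarith
  have h12' : (0:ℝ) ≤ 12 * z := by linarith
  have hc0 : c 0 = 0 := by rw [c]
  -- summability
  have hle : ∀ n : ℕ, (c n : ℝ) * z ^ n ≤ (12*z) ^ n := by
    intro n
    rw [mul_pow]
    gcongr
    exact_mod_cast c_le_twelve n
  have hsum : Summable (fun n : ℕ => (c n : ℝ) * z ^ n) :=
    Summable.of_nonneg_of_le (fun n => by positivity) hle
      (summable_geometric_of_lt_one h12' h12)
  set L := ∑' n, (c n : ℝ) * z ^ n with hLdef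
  have hS : HasSum (fun n : ℕ => (c n : ℝ) * z ^ n) L := hsum.hasSum
  -- shifted sum
  have h0 : HasSum (fun n : ℕ => (c (n+1) : ℝ) * z ^ (n+1)) L := by
    rw [hasSum_nat_add_iff (f := fun n : ℕ => (c n : ℝ) * z ^ n) 1]
    simpa [hc0] using hS
  -- pieces
  have h1 : HasSum (fun n : ℕ => z ^ (n+1)) (z * (1-z)⁻¹) := by
    have := (hasSum_geometric_of_lt_one hz0.le hz1).mul_left z
    exact (show (fun n : ℕ => z ^ (n+1)) = fun n => z * z ^ n from
      funext fun n => by ring) ▸ this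
  have h2 : HasSum (fun n : ℕ => (c n : ℝ) * z ^ n * z) (L * z) := hS.mul_right z
  have hnorm : Summable (fun n : ℕ => ‖(c n : ℝ) * z ^ n‖) :=
    hsum.congr fun n => (Real.norm_of_nonneg (by positivity)).symm
  have hC := hasSum_sum_range_mul_of_summable_norm hnorm hnorm
  rw [← hLdef] at hC
  have h3 := hC.mul_right z
  have hAll := (h1.add h2).add h3
  have hfun : (fun n : ℕ => z ^ (n+1) + (c n : ℝ) * z ^ n * z
      + (∑ k ∈ Finset.range (n+1), ((c k : ℝ) * z ^ k) * ((c (n-k) : ℝ) * z ^ (n-k))) * z)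
      = fun n : ℕ => (c (n+1) : ℝ) * z ^ (n+1) := by
    funext n
    have hs : (∑ k ∈ Finset.range (n+1), ((c k : ℝ) * z ^ k) * ((c (n-k) : ℝ) * z ^ (n-k)))
        = (∑ k ∈ Finset.range (n+1), ((c k : ℝ) * (c (n-k) : ℝ))) * z ^ n := by
      rw [Finset.sum_mul]
      refine Finset.sum_congr rfl fun k hk => ?_
      rw [Finset.mem_range] at hk
      have hzz : z ^ k * z ^ (n-k) = z ^ n := by rw [← pow_add]; congr 1; omega
      calc ((c k : ℝ) * z ^ k) * ((c (n-k) : ℝ) * z ^ (n-k))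
          = ((c k : ℝ) * (c (n-k) : ℝ)) * (z ^ k * z ^ (n-k)) := by ring
        _ = _ := by rw [hzz]
    rw [hs, c_succ]
    push_cast
    ring
  rw [hfun] at hAll
  have eqn : L = z * (1-z)⁻¹ + L * z + L * L * z := h0.unique hAll
  -- bounds on L
  have hL0 : 0 ≤ L := hasSum_le (fun n => by positivity) hasSum_zero hS
  have hLle : L ≤ (1 - 12*z)⁻¹ :=
    hasSum_le hle hS (hasSum_geometric_of_lt_one h12' h12)
  have h88 : (0:ℝ) < 1 - 12*z := by linarith
  have hL2 : L ≤ 2 := by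
    refine hLle.trans ?_
    rw [inv_eq_one_div, div_le_iff₀ h88]
    linarith
  -- algebra
  have hz : z ≠ 0 := ne_of_gt hz0
  have h1z : (1:ℝ) - z ≠ 0 := by intro h; linarith [hz1]
  have hw : (1-z)⁻¹ * (1-z) = 1 := inv_mul_cancel₀ h1z
  have eqn2 : L * (1-z) = z + L*z*(1-z) + L*L*z*(1-z) := by
    linear_combination (1-z)*eqn + z*hw
  have key : (1 - 3*z - z^2 - z^3) / (1 - z) = (1 - z - 2*z*L)^2 := by
    rw [div_eq_iff h1z]
    linear_combination (4*z)*eqn2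
  have hnn : 0 ≤ 1 - z - 2*z*L := by nlinarith
  have hval : (1 - z - Real.sqrt ((1 - 3*z - z^2 - z^3) / (1 - z))) / (2*z) = L := by
    rw [key, Real.sqrt_sq hnn]
    field_simp
    ring
  have hfun2 : (fun n : ℕ => (pureCount n : ℝ) * z ^ n)
      = fun n : ℕ => (c n : ℝ) * z ^ n :=
    funext fun n => by rw [pureCount_eq]
  rw [hfun2, hval]
  exact hS
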